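/- Let L be a profinite (compact, Hausdorff, totally disconnected) space and N a discrete abelian group. Then the canonical map C(L, ℤ) ⊗_ℤ N → C(L, N) sending f ⊗ n to the function x ↦ f(x)·n is an isomorphism of abelian groups. -/

import Mathlib

open TensorProduct

variable {L N : Type*} [TopologicalSpace L] [AddCommGroup N] [TopologicalSpace N]
  [DiscreteTopology N]

instance : ContinuousConstSMul ℤ N := ⟨fun _ => continuous_of_discreteTopology⟩

/-- The bilinear map `C(L,ℤ) × N → C(L,N)` sending `(f, n)` to `x ↦ f x • n`. -/
noncomputable def smulBilin : C(L, ℤ) →ₗ[ℤ] N →ₗ[ℤ] C(L, N) :=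
  LinearMap.mk₂ ℤ
    (fun f n => ContinuousMap.mk (fun x => f x • n)
      (Continuous.comp (continuous_of_discreteTopology (f := fun m : ℤ => m • n))
        f.continuous))
    (by intro f f' n; ext x; simp [add_smul])
    (by intro c f n; ext x; simp [mul_smul])
    (by intro f n n'; ext x; simp)
    (by intro c f n; ext x; exact smul_comm _ _ _)

/-- The indicator function of a clopen set, as a continuous map to `ℤ`. -/
noncomputable def chiC {U : Set L} (hU : IsClopen U) : C(L, ℤ) :=
  ⟨fun x => Bool.rec (motive := fun _ => ℤ) 0 1 (U.boolIndicator x),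
    (continuous_of_discreteTopology (f := fun b : Bool => Bool.rec (motive := fun _ => ℤ) 0 1 b)).comp
      ((continuous_boolIndicator_iff_isClopen U).2 hU)⟩

lemma chiC_of_mem {U : Set L} (hU : IsClopen U) {x : L} (hx : x ∈ U) : chiC hU x = 1 := by
  have : U.boolIndicator x = true := (U.mem_iff_boolIndicator x).1 hx
  simp [chiC, this]

lemma chiC_of_not_mem {U : Set L} (hU : IsClopen U) {x : L} (hx : x ∉ U) : chiC hU x = 0 := by
  have : U.boolIndicator x = false := by
    by_contra h
    exact hx ((U.mem_iff_boolIndicator x).2 (eq_true_of_ne_false h))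
  simp [chiC, this]

instance : IsTopologicalAddGroup N :=
  { continuous_add := continuous_of_discreteTopology
    continuous_neg := continuous_of_discreteTopology }

lemma lift_smulBilin_apply (t : C(L, ℤ) ⊗[ℤ] N) (x : L) (S : Finset (C(L, ℤ) × N))
    (ht : t = S.sum fun i => i.1 ⊗ₜ[ℤ] i.2) :
    TensorProduct.lift (smulBilin (L := L) (N := N)) t x = ∑ i ∈ S, i.1 x • i.2 := by
  subst ht
  rw [map_sum]
  rw [ContinuousMap.coe_sum, Finset.sum_apply]
  refine Finset.sum_congr rfl fun i _ => ?_
  simp [smulBilin]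

lemma stmt_7_inj [CompactSpace L] (t : C(L, ℤ) ⊗[ℤ] N)
    (h : TensorProduct.lift (smulBilin (L := L) (N := N)) t = 0) : t = 0 := by
  classical
  obtain ⟨S, rfl⟩ := TensorProduct.exists_finset t
  -- the combined "coordinates" map
  set g : L → (S → ℤ) := fun x i => (i : C(L, ℤ) × N).1 x with hg_def
  have hg : IsLocallyConstant g := by
    rw [IsLocallyConstant.iff_eventually_eq]
    intro x
    have h1 : ∀ i : S, ∀ᶠ y in nhds x, (i : C(L, ℤ) × N).1 y = (i : C(L, ℤ) × N).1 x :=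
      fun i => ((IsLocallyConstant.iff_continuous _).2 (i : C(L, ℤ) × N).1.continuous).eventually_eq x
    filter_upwards [Filter.eventually_all.2 h1] with y hy
    funext i
    exact hy i
  set R : Finset (S → ℤ) := hg.range_finite.toFinset with hR_def
  have hmemR : ∀ x : L, g x ∈ R := fun x => by
    simp [hR_def, Set.Finite.mem_toFinset]
  -- clopen fibers
  have hfib : ∀ v : S → ℤ, IsClopen {x : L | g x = v} := fun v => hg.isClopen_fiber v
  -- each coordinate function decomposes along fibers
  have hdecomp : ∀ i : S, ((i : C(L, ℤ) × N).1 : C(L, ℤ)) =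
      ∑ v ∈ R, v i • chiC (hfib v) := by
    intro i
    ext x
    rw [ContinuousMap.coe_sum, Finset.sum_apply]
    rw [Finset.sum_eq_single_of_mem (g x) (hmemR x)]
    · rw [ContinuousMap.coe_smul, Pi.smul_apply,
        chiC_of_mem (hfib (g x)) (by simp : x ∈ {y | g y = g x})]
      simp [hg_def]
    · intro v _ hv
      rw [ContinuousMap.coe_smul, Pi.smul_apply,
        chiC_of_not_mem (hfib v) (by simpa using fun hc : g x = v => hv hc.symm)]
      simp
  -- rewrite the tensor
  have key : (S.sum fun i => i.1 ⊗ₜ[ℤ] i.2) =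
      ∑ v ∈ R, (chiC (hfib v)) ⊗ₜ[ℤ] (∑ i ∈ S.attach, v i • (i : C(L, ℤ) × N).2) := by
    rw [← Finset.sum_attach S (fun i => i.1 ⊗ₜ[ℤ] i.2)]
    calc (∑ i ∈ S.attach, (i : C(L, ℤ) × N).1 ⊗ₜ[ℤ] (i : C(L, ℤ) × N).2)
        = ∑ i ∈ S.attach, ∑ v ∈ R, (chiC (hfib v)) ⊗ₜ[ℤ] (v i • (i : C(L, ℤ) × N).2) := by
          refine Finset.sum_congr rfl fun i _ => ?_
          rw [hdecomp i, TensorProduct.sum_tmul]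
          refine Finset.sum_congr rfl fun v _ => ?_
          rw [TensorProduct.smul_tmul]
      _ = ∑ v ∈ R, ∑ i ∈ S.attach, (chiC (hfib v)) ⊗ₜ[ℤ] (v i • (i : C(L, ℤ) × N).2) :=
          Finset.sum_comm
      _ = ∑ v ∈ R, (chiC (hfib v)) ⊗ₜ[ℤ] (∑ i ∈ S.attach, v i • (i : C(L, ℤ) × N).2) := by
          refine Finset.sum_congr rfl fun v _ => ?_
          rw [TensorProduct.tmul_sum]
  rw [key]
  refine Finset.sum_eq_zero fun v hv => ?_
  obtain ⟨x, hx⟩ : ∃ x : L, g x = v := by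
    have := (Set.Finite.mem_toFinset hg.range_finite).1 hv
    exact this
  have h0 : (∑ i ∈ S.attach, v i • (i : C(L, ℤ) × N).2) = 0 := by
    have := congrFun (congrArg DFunLike.coe h) x
    rw [lift_smulBilin_apply _ x S rfl] at this
    simp only [ContinuousMap.zero_apply] at this
    rw [← this, ← Finset.sum_attach S (fun i => i.1 x • i.2)]
    refine Finset.sum_congr rfl fun i _ => ?_
    rw [← hx]
  rw [h0, TensorProduct.tmul_zero]

/-- for a profinite space L and a discrete abelian group N, the canonical
map `C(L,ℤ) ⊗ N → C(L,N)`, `f ⊗ n ↦ (x ↦ f x • n)`, is an isomorphism. -/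
theorem stmt_7 [CompactSpace L] [T2Space L] [TotallyDisconnectedSpace L] :
    Function.Bijective (TensorProduct.lift (smulBilin (L := L) (N := N))) := by
  classical
  constructor
  · intro a b hab
    have : TensorProduct.lift (smulBilin (L := L) (N := N)) (a - b) = 0 := by
      rw [map_sub, hab, sub_self]
    exact sub_eq_zero.mp (stmt_7_inj _ this)
  · intro f
    have hlc : IsLocallyConstant (f : L → N) :=
      (IsLocallyConstant.iff_continuous _).2 f.continuous
    set R : Finset N := hlc.range_finite.toFinset with hR_def
    have hfib : ∀ n : N, IsClopen {x : L | f x = n} := fun n => hlc.isClopen_fiber n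
    refine ⟨∑ n ∈ R, (chiC (hfib n)) ⊗ₜ[ℤ] n, ?_⟩
    ext x
    rw [map_sum, ContinuousMap.coe_sum, Finset.sum_apply]
    have hterm : ∀ n ∈ R,
        (TensorProduct.lift (smulBilin (L := L) (N := N)) (chiC (hfib n) ⊗ₜ[ℤ] n)) x =
          chiC (hfib n) x • n := fun n _ => by
      rw [TensorProduct.lift.tmul]; simp [smulBilin]
    rw [Finset.sum_congr rfl hterm,
      Finset.sum_eq_single_of_mem (f x)
        (by simp [hR_def, Set.Finite.mem_toFinset])
        (fun n _ hn => by
          rw [chiC_of_not_mem (hfib n) (by simpa using fun hc : f x = n => hn hc.symm), zero_smul]),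
      chiC_of_mem (hfib (f x)) (by simp : x ∈ {y | f y = f x}), one_smul]
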